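/- Let n : ℕ, E = EuclideanSpace ℝ (Fin n), and k ≥ 1. Let h : E → E be continuously differentiable and positively homogeneous of degree k, i.e., h (t • x) = t^k • h x for all t > 0 and all x ∈ E. Suppose that for every x ∈ E the Fréchet derivative fderiv ℝ h x is self-adjoint: ⟪(fderiv ℝ h x) v, w⟫ = ⟪v, (fderiv ℝ h x) w⟫ for all v, w ∈ E. Then the function V : E → ℝ defined by V(x) = ⟪x, h x⟫ / (k + 1) satisfies gradient V x = h x for all x ∈ E. -/

import Mathlib

open scoped RealInnerProductSpace

theorem stmt_3 (n k : ℕ) (hk : 1 ≤ k)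
    (h : EuclideanSpace ℝ (Fin n) → EuclideanSpace ℝ (Fin n))
    (hC1 : ContDiff ℝ 1 h)
    (hhom : ∀ t : ℝ, 0 < t → ∀ x, h (t • x) = t ^ k • h x)
    (hsym : ∀ x v w, ⟪(fderiv ℝ h x) v, w⟫ = ⟪v, (fderiv ℝ h x) w⟫)
    (V : EuclideanSpace ℝ (Fin n) → ℝ)
    (hV : ∀ x, V x = ⟪x, h x⟫ / (k + 1)) :
    ∀ x, gradient V x = h x := by
  have hdiff : Differentiable ℝ h := hC1.differentiable one_ne_zero
  -- Euler's identity
  have euler : ∀ x, (fderiv ℝ h x) x = (k : ℝ) • h x := by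
    intro x
    have hg : HasDerivAt (fun t : ℝ => t • x) x 1 := by
      simpa using (hasDerivAt_id (1 : ℝ)).smul_const x
    have hfd : HasFDerivAt h (fderiv ℝ h x) ((1 : ℝ) • x) := by
      rw [one_smul]; exact (hdiff x).hasFDerivAt
    have h1 : HasDerivAt (fun t : ℝ => h (t • x)) ((fderiv ℝ h x) x) 1 :=
      hfd.comp_hasDerivAt 1 hg
    have h2 : HasDerivAt (fun t : ℝ => t ^ k • h x) ((k : ℝ) • h x) 1 := by
      simpa using (hasDerivAt_pow k (1 : ℝ)).smul_const (h x)
    have heq : (fun t : ℝ => t ^ k • h x) =ᶠ[nhds (1 : ℝ)] fun t => h (t • x) := by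
      filter_upwards [Ioi_mem_nhds (show (0 : ℝ) < 1 by norm_num)] with t ht
      exact (hhom t ht x).symm
    exact h1.unique (h2.congr_of_eventuallyEq heq.symm)
  intro x
  have hx : HasFDerivAt h (fderiv ℝ h x) x := (hdiff x).hasFDerivAt
  have hinner : HasFDerivAt (fun y => ⟪y, h y⟫)
      ((fderivInnerCLM ℝ (x, h x)).comp ((ContinuousLinearMap.id ℝ _).prod (fderiv ℝ h x))) x := by
    simpa using (hasFDerivAt_id x).inner ℝ hx
  have hk0 : ((k : ℝ) + 1) ≠ 0 := by positivity
  have hVeq : V = fun y => ((k : ℝ) + 1)⁻¹ • ⟪y, h y⟫ := by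
    funext y; rw [hV y, smul_eq_mul]; ring
  have hVf : HasFDerivAt V
      (((k : ℝ) + 1)⁻¹ •
        ((fderivInnerCLM ℝ (x, h x)).comp ((ContinuousLinearMap.id ℝ _).prod (fderiv ℝ h x)))) x := by
    rw [hVeq]
    exact hinner.const_smul (((k : ℝ) + 1)⁻¹)
  have hgrad : HasGradientAt V (h x) x := by
    rw [hasGradientAt_iff_hasFDerivAt]
    refine hVf.congr_fderiv (Eq.symm ?_)
    ext w
    simp only [InnerProductSpace.toDual_apply_apply, ContinuousLinearMap.smul_apply,
      ContinuousLinearMap.comp_apply, ContinuousLinearMap.prod_apply,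
      ContinuousLinearMap.id_apply, fderivInnerCLM_apply]
    rw [← hsym x x w, euler x, real_inner_smul_left, real_inner_comm w (h x)]
    field_simp
    rw [smul_eq_mul, one_div, mul_comm ⟪w, h x⟫, inv_mul_cancel_left₀ hk0]
  exact hgrad.gradient
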